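/- Let l ≥ 2 and k ≥ 0. Starting from the pair of constant sequences d^{l-1} = (1,...,1) (l−1 ones) and d^{l} = (1,...,1) (l ones), applying once the operation S and then k times the operation T (each T applied to the last two sequences produced) yields the sequence (1,...,1, 2+k, ..., 2+k) consisting of 2+k ones followed by l−1 copies of 2+k. -/

import Mathlib

def opS (α β : List ℕ) : List ℕ := 1 :: 1 :: List.zipWith (· + ·) α β.tail

def opT (α β : List ℕ) : List ℕ :=
  1 :: 1 :: List.zipWith (fun a b => 2*b - a) α β.tail

/-- Pair step for the two-argument operation T: keep the last two sequences. -/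
def stepT (p : List ℕ × List ℕ) : List ℕ × List ℕ := (p.2, opT p.1 p.2)

lemma zipWith_rep_app (f : ℕ → ℕ → ℕ) (n m : ℕ) (a b c d : ℕ) :
    List.zipWith f (List.replicate n a ++ List.replicate m c)
      (List.replicate n b ++ List.replicate m d)
      = List.replicate n (f a b) ++ List.replicate m (f c d) := by
  rw [List.zipWith_append (by simp : (List.replicate n a).length = (List.replicate n b).length)]
  simp [List.zipWith_replicate]

lemma pair_formula (l k : ℕ) (hl : 1 ≤ l) :
    stepT^[k] (List.replicate l 1,
        List.replicate 2 1 ++ List.replicate (l-1) 2)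
      = (List.replicate (1+k) 1 ++ List.replicate (l-1) (1+k),
         List.replicate (2+k) 1 ++ List.replicate (l-1) (2+k)) := by
  induction k with
  | zero =>
      simp only [Function.iterate_zero, id_eq, Nat.add_zero]
      rw [Prod.mk.injEq]
      refine ⟨?_, rfl⟩
      rw [← List.replicate_add]
      congr 1
      omega
  | succ k ih =>
      rw [Function.iterate_succ_apply', ih]
      simp only [stepT, opT]
      have htail : (List.replicate (2+k) 1 ++ List.replicate (l-1) (2+k)).tail
          = List.replicate (1+k) 1 ++ List.replicate (l-1) (2+k) := by
        rw [show (2:ℕ)+k = 1 + (1+k) by omega, List.replicate_add]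
        simp
      rw [htail, zipWith_rep_app]
      have h1 : 2*1 - 1 = 1 := by norm_num
      have h2 : 2*(2+k) - (1+k) = 3+k := by omega
      rw [h1, h2, Prod.mk.injEq]
      constructor
      · rw [show (1:ℕ)+(k+1) = 2+k by omega]
      · rw [List.replicate_add, show (2:ℕ)+(k+1) = 3+k by omega]
        simp [List.replicate_add, List.replicate_succ]

/-- Starting from `d^{l-1} = (1,…,1)` and `d^l = (1,…,1)`, one S followed by `k`
T's yields `2+k` ones followed by `l−1` copies of `2+k`. -/
theorem derived_ST (l k : ℕ) (hl : 2 ≤ l) :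
    (stepT^[k] (List.replicate l 1,
        opS (List.replicate (l-1) 1) (List.replicate l 1))).2
      = List.replicate (2+k) 1 ++ List.replicate (l-1) (2+k) := by
  have hS : opS (List.replicate (l-1) 1) (List.replicate l 1)
      = List.replicate 2 1 ++ List.replicate (l-1) 2 := by
    simp only [opS]
    rw [show l = 1 + (l-1) by omega, List.replicate_add]
    simp [List.zipWith_replicate]
  rw [hS, pair_formula l k (by omega)]
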